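/- arXiv:2007.04407 — 2 statements merged into one kernel-verified Lean document; each statement's English description precedes it below -/
import Mathlib

section
/- Let n and N be integers with 4 ≤ n ≤ N. Then (n−1)·cot(π/N) ≤ 2(N−1)·cot(π/n). (Equivalently, with maximal string-barrier length R̄_s > 0 and ρ̄_ac = (R̄_s/2)·cot(π/N): the quantity (ρ̄_ac/(N−1))·(n−1)/2 is at most (R̄_s/2)·cot(π/n).) This is the key quantitative inequality underlying the paper's Lemma on DBSCAN cluster radii. -/
open Real

/-- For `0 < x < π/2`, `cot x ≤ 1/x`. -/
lemma cot_le_inv {x : ℝ} (h1 : 0 < x) (h2 : x < π / 2) : Real.cot x ≤ 1 / x := by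
  have hcos : 0 < Real.cos x := Real.cos_pos_of_mem_Ioo ⟨by linarith [Real.pi_pos], h2⟩
  have hsin : 0 < Real.sin x := Real.sin_pos_of_pos_of_lt_pi h1 (by linarith [Real.pi_pos])
  have htan : x < Real.tan x := Real.lt_tan h1 h2
  rw [Real.tan_eq_sin_div_cos, lt_div_iff₀ hcos] at htan
  rw [Real.cot_eq_cos_div_sin, div_le_div_iff₀ hsin h1, one_mul]
  nlinarith
/-- For `0 < x < π` with `x² ≤ 2`, `1/x - x/2 ≤ cot x`. -/
lemma inv_sub_le_cot {x : ℝ} (h1 : 0 < x) (h2 : x < π) (h3 : x ^ 2 ≤ 2) :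
    1 / x - x / 2 ≤ Real.cot x := by
  have hsin : 0 < Real.sin x := Real.sin_pos_of_pos_of_lt_pi h1 h2
  have hsinle : Real.sin x ≤ x := Real.sin_le h1.le
  have hcos : 1 - x ^ 2 / 2 ≤ Real.cos x := Real.one_sub_sq_div_two_le_cos
  have heq : 1 / x - x / 2 = (2 - x ^ 2) / (2 * x) := by field_simp
  rw [Real.cot_eq_cos_div_sin, heq, div_le_div_iff₀ (by positivity) hsin]
  nlinarith [mul_le_mul_of_nonneg_left hsinle (by nlinarith : (0:ℝ) ≤ 2 - x ^ 2)]

/-- Key quantitative inequality underlying the paper's Lemma on DBSCAN cluster radii: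
for integers `4 ≤ n ≤ N`, `(n−1)·cot(π/N) ≤ 2(N−1)·cot(π/n)`. -/
theorem dbscan_cluster_radius_ineq (n N : ℕ) (h4 : 4 ≤ n) (hnN : n ≤ N) :
    ((n : ℝ) - 1) * Real.cot (π / N) ≤ 2 * ((N : ℝ) - 1) * Real.cot (π / n) := by
  have hn : (4 : ℝ) ≤ n := by exact_mod_cast h4
  have hN : (n : ℝ) ≤ N := by exact_mod_cast hnN
  have hπ : (0 : ℝ) < π := Real.pi_pos
  have hnpos : (0 : ℝ) < n := by linarith
  have hNpos : (0 : ℝ) < N := by linarith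
  have ha1 : 0 < π / N := by positivity
  have hb1 : 0 < π / n := by positivity
  have hπlt : π < 3.15 := Real.pi_lt_d2
  have ha2 : π / N < π / 2 := by
    rw [div_lt_div_iff₀ hNpos (by norm_num)]; nlinarith
  have hb2 : π / n < π := by
    rw [div_lt_iff₀ hnpos]; nlinarith
  have hb3 : (π / n) ^ 2 ≤ 2 := by
    have h : π / n ≤ 1 := by rw [div_le_one hnpos]; linarith
    nlinarith
  have h1 : Real.cot (π / N) ≤ 1 / (π / N) := cot_le_inv ha1 ha2
  have h2 : 1 / (π / n) - (π / n) / 2 ≤ Real.cot (π / n) := inv_sub_le_cot hb1 hb2 hb3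
  have hπsq : π ^ 2 ≤ 10 := by nlinarith
  have hmid : ((n : ℝ) - 1) * (1 / (π / N)) ≤ 2 * ((N : ℝ) - 1) * (1 / (π / n) - (π / n) / 2) := by
    have hpos : (0:ℝ) < π * n := by positivity
    rw [← mul_le_mul_iff_of_pos_right hpos]
    have hl : ((n:ℝ) - 1) * (1 / (π / N)) * (π * n) = ((n:ℝ) - 1) * N * n := by
      field_simp
    have hr : 2 * ((N:ℝ) - 1) * (1 / (π / n) - (π / n) / 2) * (π * n)
        = 2 * ((N:ℝ) - 1) * (n ^ 2 - π ^ 2 / 2) := by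
      field_simp
    rw [hl, hr]
    nlinarith [mul_le_mul_of_nonneg_left hπsq (by linarith : (0:ℝ) ≤ (N:ℝ) - 1),
      mul_nonneg (by linarith : (0:ℝ) ≤ (N:ℝ) - n) (by nlinarith : (0:ℝ) ≤ (n:ℝ)^2 + n - 10),
      mul_nonneg (mul_nonneg (by linarith : (0:ℝ) ≤ (n:ℝ) - 4) hnpos.le) hnpos.le]
  calc ((n : ℝ) - 1) * Real.cot (π / N) ≤ ((n : ℝ) - 1) * (1 / (π / N)) := by
        apply mul_le_mul_of_nonneg_left h1; linarith
    _ ≤ 2 * ((N : ℝ) - 1) * (1 / (π / n) - (π / n) / 2) := hmid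
    _ ≤ 2 * ((N : ℝ) - 1) * Real.cot (π / n) := by
        apply mul_le_mul_of_nonneg_left h2; linarith
end

section
/- Let N_d and N_ac be positive integers, let n_1, …, n_{N_ac} be positive integers with n_1 + ⋯ + n_{N_ac} = N_d, and let δ ∈ {0,1}^{N_d × N_ac} satisfy: (i) Σ_{k=1}^{N_ac} δ_{jk} = 1 for every j ∈ {1,…,N_d}; (ii) Σ_{j=1}^{N_d} δ_{jk} = n_k for every k ∈ {1,…,N_ac}; and (iii) Σ_{j=1}^{N_d−1} δ_{jk}·δ_{(j+1)k} ≥ n_k − 1 for every k. Then for every k, the set S_k = { j : δ_{jk} = 1 } is an interval of consecutive integers of cardinality n_k, and the sets S_1, …, S_{N_ac} partition {1, …, N_d}. -/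
/-- A nonempty finite set of naturals with at least `card S - 1` adjacent pairs
is an interval. -/
lemma c2gap_interval_lemma (S : Finset ℕ) (hS : S.Nonempty)
    (h : S.card - 1 ≤ (S.filter (fun j => j + 1 ∈ S)).card) :
    ∃ a b : ℕ, S = Finset.Icc a b := by
  classical
  set a := S.min' hS with ha
  set b := S.max' hS with hb
  set T := S.filter (fun j => j + 1 ∈ S) with hT
  have himg : T.image (· + 1) ⊆ S.erase a := by
    intro x hx
    simp only [Finset.mem_image] at hx
    obtain ⟨j, hj, rfl⟩ := hx
    rw [Finset.mem_filter] at hj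
    refine Finset.mem_erase.2 ⟨?_, hj.2⟩
    have := S.min'_le j hj.1
    omega
  have hcard : (S.erase a).card ≤ (T.image (· + 1)).card := by
    rw [Finset.card_image_of_injective _ (fun x y h => by omega),
      Finset.card_erase_of_mem (S.min'_mem hS)]
    exact h
  have heq : T.image (· + 1) = S.erase a := Finset.eq_of_subset_of_card_le himg hcard
  have key : ∀ m, a ≤ b - m → b - m ∈ S := by
    intro m
    induction m with
    | zero => intro _; simpa using S.max'_mem hS
    | succ m ih =>
      intro hm
      by_cases hbm : b - (m + 1) = b - m
      · rw [hbm]; exact ih (by omega)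
      · have h1 : b - m ∈ S := ih (by omega)
        have h2 : b - m ∈ S.erase a := Finset.mem_erase.2 ⟨by omega, h1⟩
        rw [← heq, Finset.mem_image] at h2
        obtain ⟨j, hj, hj1⟩ := h2
        rw [Finset.mem_filter] at hj
        have hje : j = b - (m + 1) := by omega
        rw [← hje]; exact hj.1
  refine ⟨a, b, ?_⟩
  ext x
  simp only [Finset.mem_Icc]
  constructor
  · intro hx; exact ⟨S.min'_le x hx, S.le_max' x hx⟩
  · rintro ⟨hax, hxb⟩
    have := key (b - x) (by omega)
    rwa [show b - (b - x) = x by omega] at this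

/-- The C2GAP constraints force a valid connected assignment: if the binary variables
`δ j k` (defenders `j ∈ {1,…,N_d}`, swarms `k ∈ {1,…,N_ac}`) satisfy
(i) each defender is assigned to exactly one swarm,
(ii) swarm `k` receives exactly `n k` defenders (with `∑ k, n k = N_d`), and
(iii) `∑_{j=1}^{N_d−1} δ j k · δ (j+1) k ≥ n k − 1` for every `k`,
then each set `S_k = {j : δ j k = 1}` is an interval of consecutive integers of
cardinality `n k`, and the sets `S_1, …, S_{N_ac}` partition `{1, …, N_d}`. -/
theorem c2gap_connectivity (Nd Nac : ℕ) (hNd : 0 < Nd) (hNac : 0 < Nac)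
    (n : ℕ → ℕ) (hn : ∀ k ∈ Finset.Icc 1 Nac, 0 < n k)
    (hsum : ∑ k ∈ Finset.Icc 1 Nac, n k = Nd)
    (δ : ℕ → ℕ → ℕ)
    (hbin : ∀ j ∈ Finset.Icc 1 Nd, ∀ k ∈ Finset.Icc 1 Nac, δ j k = 0 ∨ δ j k = 1)
    (h1 : ∀ j ∈ Finset.Icc 1 Nd, ∑ k ∈ Finset.Icc 1 Nac, δ j k = 1)
    (h2 : ∀ k ∈ Finset.Icc 1 Nac, ∑ j ∈ Finset.Icc 1 Nd, δ j k = n k)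
    (h3 : ∀ k ∈ Finset.Icc 1 Nac,
      n k - 1 ≤ ∑ j ∈ Finset.Icc 1 (Nd - 1), δ j k * δ (j + 1) k) :
    (∀ k ∈ Finset.Icc 1 Nac,
      (∃ a b : ℕ, (Finset.Icc 1 Nd).filter (fun j => δ j k = 1) = Finset.Icc a b) ∧
      ((Finset.Icc 1 Nd).filter (fun j => δ j k = 1)).card = n k) ∧
    (∀ k ∈ Finset.Icc 1 Nac, ∀ k' ∈ Finset.Icc 1 Nac, k ≠ k' →
      Disjoint ((Finset.Icc 1 Nd).filter (fun j => δ j k = 1))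
        ((Finset.Icc 1 Nd).filter (fun j => δ j k' = 1))) ∧
    (Finset.Icc 1 Nac).biUnion (fun k => (Finset.Icc 1 Nd).filter (fun j => δ j k = 1)) =
      Finset.Icc 1 Nd := by
  classical
  -- cardinality of each S_k
  have hcard : ∀ k ∈ Finset.Icc 1 Nac,
      ((Finset.Icc 1 Nd).filter (fun j => δ j k = 1)).card = n k := by
    intro k hk
    rw [Finset.card_filter, ← h2 k hk]
    refine Finset.sum_congr rfl (fun j hj => ?_)
    rcases hbin j hj k hk with h | h <;> simp [h]
  refine ⟨?_, ?_, ?_⟩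
  · -- interval + cardinality
    intro k hk
    set S := (Finset.Icc 1 Nd).filter (fun j => δ j k = 1) with hSdef
    have hcardk : S.card = n k := hcard k hk
    have hSne : S.Nonempty := by
      rw [← Finset.card_pos, hcardk]; exact hn k hk
    refine ⟨?_, hcardk⟩
    -- the adjacency sum counts the adjacent pairs in S
    have hfilt : S.filter (fun j => j + 1 ∈ S) =
        (Finset.Icc 1 (Nd - 1)).filter (fun j => δ j k = 1 ∧ δ (j + 1) k = 1) := by
      ext j
      simp only [hSdef, Finset.mem_filter, Finset.mem_Icc]
      constructor
      · rintro ⟨⟨⟨hj1, hj2⟩, hδ⟩, ⟨hj1', hj2'⟩, hδ'⟩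
        exact ⟨⟨hj1, by omega⟩, hδ, hδ'⟩
      · rintro ⟨⟨hj1, hj2⟩, hδ, hδ'⟩
        exact ⟨⟨⟨hj1, by omega⟩, hδ⟩, ⟨by omega, by omega⟩, hδ'⟩
    have hsum2 : ∑ j ∈ Finset.Icc 1 (Nd - 1), δ j k * δ (j + 1) k =
        (S.filter (fun j => j + 1 ∈ S)).card := by
      rw [hfilt, Finset.card_filter]
      refine Finset.sum_congr rfl (fun j hj => ?_)
      rw [Finset.mem_Icc] at hj
      have hjm : j ∈ Finset.Icc 1 Nd := Finset.mem_Icc.2 ⟨hj.1, by omega⟩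
      have hjm' : j + 1 ∈ Finset.Icc 1 Nd := Finset.mem_Icc.2 ⟨by omega, by omega⟩
      rcases hbin j hjm k hk with h | h <;>
        rcases hbin (j + 1) hjm' k hk with h' | h' <;> simp [h, h']
    have hadj : S.card - 1 ≤ (S.filter (fun j => j + 1 ∈ S)).card := by
      rw [hcardk, ← hsum2]; exact h3 k hk
    exact c2gap_interval_lemma S hSne hadj
  · -- disjointness
    intro k hk k' hk' hne
    rw [Finset.disjoint_left]
    intro j hj hj'
    rw [Finset.mem_filter] at hj hj'
    have hsumj := h1 j hj.1
    have hle : δ j k + δ j k' ≤ ∑ k'' ∈ Finset.Icc 1 Nac, δ j k'' := by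
      rw [← Finset.add_sum_erase _ _ hk]
      exact Nat.add_le_add_left
        (Finset.single_le_sum (fun i _ => Nat.zero_le _)
          (Finset.mem_erase.2 ⟨hne.symm, hk'⟩)) _
    rw [hsumj, hj.2, hj'.2] at hle
    omega
  · -- union
    apply Finset.Subset.antisymm
    · intro j hj
      rw [Finset.mem_biUnion] at hj
      obtain ⟨k, _, hjk⟩ := hj
      exact (Finset.mem_filter.1 hjk).1
    · intro j hj
      rw [Finset.mem_biUnion]
      have hsumj := h1 j hj
      have : ∃ k ∈ Finset.Icc 1 Nac, δ j k ≠ 0 :=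
        Finset.exists_ne_zero_of_sum_ne_zero (by omega)
      obtain ⟨k, hk, hδ⟩ := this
      refine ⟨k, hk, Finset.mem_filter.2 ⟨hj, ?_⟩⟩
      rcases hbin j hj k hk with h | h
      · exact absurd h hδ
      · exact h
end
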